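/- arXiv:2007.13482 — 2 statements merged into one kernel-verified Lean document; each statement's English description precedes it below -/
import Mathlib

section
/- Binary convergence: define the recursion p(k+1) = p(k) − p(k)(1−p(k))(p(k)−ρ)/W(p(k)) with W(p) = 1 − (1−ρ)p² − ρ(1−p)², 0 < ρ < 1. For any initial value 0 < p(0) < 1, the sequence p(k) converges to ρ as k → ∞. -/
open Filter

private lemma Wpos14 (ρ x : ℝ) (hρ : ρ ∈ Set.Ioo (0:ℝ) 1) (hx : x ∈ Set.Ioo (0:ℝ) 1) :
    0 < 1 - (1 - ρ) * x ^ 2 - ρ * (1 - x) ^ 2 := by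
  obtain ⟨h1, h2⟩ := hρ; obtain ⟨h3, h4⟩ := hx
  nlinarith [mul_pos h3 (sub_pos.2 h4), mul_pos h1 (sub_pos.2 h2),
    mul_pos (sub_pos.2 h2) (mul_pos h3 (sub_pos.2 h4)),
    mul_pos h1 (mul_pos h3 (sub_pos.2 h4))]

private lemma stepB14 (ρ x : ℝ) (hρ : ρ ∈ Set.Ioo (0:ℝ) 1) (hx1 : ρ < x) (hx2 : x < 1) :
    ρ < x - x * (1 - x) * (x - ρ) / (1 - (1 - ρ) * x ^ 2 - ρ * (1 - x) ^ 2) ∧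
    x - x * (1 - x) * (x - ρ) / (1 - (1 - ρ) * x ^ 2 - ρ * (1 - x) ^ 2) < x := by
  have hx0 : 0 < x := lt_trans hρ.1 hx1
  have hW : 0 < 1 - (1 - ρ) * x ^ 2 - ρ * (1 - x) ^ 2 := Wpos14 ρ x hρ ⟨hx0, hx2⟩
  constructor
  · have key : x - x * (1 - x) * (x - ρ) / (1 - (1 - ρ) * x ^ 2 - ρ * (1 - x) ^ 2) - ρ =
        (x - ρ) * ((1 - ρ) * (1 - x) + ρ * x) / (1 - (1 - ρ) * x ^ 2 - ρ * (1 - x) ^ 2) := by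
      rw [eq_div_iff hW.ne', sub_mul, sub_mul, div_mul_cancel₀ _ hW.ne']
      ring
    have hpos : 0 < (x - ρ) * ((1 - ρ) * (1 - x) + ρ * x) /
        (1 - (1 - ρ) * x ^ 2 - ρ * (1 - x) ^ 2) := by
      apply div_pos _ hW
      apply mul_pos (by linarith)
      have := mul_pos (sub_pos.2 hρ.2) (sub_pos.2 hx2)
      have := mul_pos hρ.1 hx0
      linarith
    linarith
  · have hpos : 0 < x * (1 - x) * (x - ρ) / (1 - (1 - ρ) * x ^ 2 - ρ * (1 - x) ^ 2) :=
      div_pos (mul_pos (mul_pos hx0 (by linarith)) (by linarith)) hW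
    linarith

private lemma stepC14 (ρ x : ℝ) (hρ : ρ ∈ Set.Ioo (0:ℝ) 1) (hx1 : 0 < x) (hx2 : x < ρ) :
    x < x - x * (1 - x) * (x - ρ) / (1 - (1 - ρ) * x ^ 2 - ρ * (1 - x) ^ 2) ∧
    x - x * (1 - x) * (x - ρ) / (1 - (1 - ρ) * x ^ 2 - ρ * (1 - x) ^ 2) < ρ := by
  have hx3 : x < 1 := lt_trans hx2 hρ.2
  have hW : 0 < 1 - (1 - ρ) * x ^ 2 - ρ * (1 - x) ^ 2 := Wpos14 ρ x hρ ⟨hx1, hx3⟩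
  constructor
  · have hneg : x * (1 - x) * (x - ρ) / (1 - (1 - ρ) * x ^ 2 - ρ * (1 - x) ^ 2) < 0 := by
      apply div_neg_of_neg_of_pos _ hW
      have := mul_pos (mul_pos hx1 (sub_pos.2 hx3)) (sub_pos.2 hx2)
      nlinarith
    linarith
  · have key : x - x * (1 - x) * (x - ρ) / (1 - (1 - ρ) * x ^ 2 - ρ * (1 - x) ^ 2) - ρ =
        (x - ρ) * ((1 - ρ) * (1 - x) + ρ * x) / (1 - (1 - ρ) * x ^ 2 - ρ * (1 - x) ^ 2) := by
      rw [eq_div_iff hW.ne', sub_mul, sub_mul, div_mul_cancel₀ _ hW.ne']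
      ring
    have hneg : (x - ρ) * ((1 - ρ) * (1 - x) + ρ * x) /
        (1 - (1 - ρ) * x ^ 2 - ρ * (1 - x) ^ 2) < 0 := by
      apply div_neg_of_neg_of_pos _ hW
      apply mul_neg_of_neg_of_pos (by linarith)
      have := mul_pos (sub_pos.2 hρ.2) (sub_pos.2 hx3)
      have := mul_pos hρ.1 hx1
      linarith
    linarith

private lemma fixedpt14 (ρ L : ℝ) (hρ : ρ ∈ Set.Ioo (0:ℝ) 1) (p : ℕ → ℝ)
    (hrec : ∀ k, p (k + 1) = p k - p k * (1 - p k) * (p k - ρ) /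
        (1 - (1 - ρ) * (p k) ^ 2 - ρ * (1 - p k) ^ 2))
    (hL : Tendsto p atTop (nhds L)) (h1 : 0 < L) (h2 : L < 1) : L = ρ := by
  have hW : 0 < 1 - (1 - ρ) * L ^ 2 - ρ * (1 - L) ^ 2 := Wpos14 ρ L hρ ⟨h1, h2⟩
  set F : ℝ → ℝ := fun x => x - x * (1 - x) * (x - ρ) /
      (1 - (1 - ρ) * x ^ 2 - ρ * (1 - x) ^ 2) with hF
  have hc : ContinuousAt F L := by
    apply ContinuousAt.sub continuousAt_id
    exact ContinuousAt.div (by fun_prop) (by fun_prop) hW.ne'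
  have h3 : Tendsto (fun k => p (k + 1)) atTop (nhds L) :=
    hL.comp (tendsto_add_atTop_nat 1)
  have h4 : Tendsto (fun k => F (p k)) atTop (nhds (F L)) := hc.tendsto.comp hL
  have h5 : (fun k => p (k + 1)) = fun k => F (p k) := funext fun k => hrec k
  rw [h5] at h3
  have h6 : F L = L := tendsto_nhds_unique h4 h3
  have h7 : L * (1 - L) * (L - ρ) / (1 - (1 - ρ) * L ^ 2 - ρ * (1 - L) ^ 2) = 0 := by
    simp only [hF] at h6
    linarith
  rcases div_eq_zero_iff.1 h7 with h | h
  · rcases mul_eq_zero.1 h with h | h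
    · rcases mul_eq_zero.1 h with h | h <;> nlinarith
    · linarith
  · exact absurd h hW.ne'

theorem stmt_14 (ρ : ℝ) (hρ : ρ ∈ Set.Ioo (0:ℝ) 1)
    (p : ℕ → ℝ) (h0 : p 0 ∈ Set.Ioo (0:ℝ) 1)
    (hrec : ∀ k, p (k + 1) =
      p k - p k * (1 - p k) * (p k - ρ) /
        (1 - (1 - ρ) * (p k) ^ 2 - ρ * (1 - p k) ^ 2)) :
    Tendsto p atTop (nhds ρ) := by
  rcases lt_trichotomy (p 0) ρ with hcmp | hcmp | hcmp
  · -- increasing case: p 0 < ρ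
    have inv : ∀ k, 0 < p k ∧ p k < ρ ∨ p k = ρ := by
      intro k
      induction k with
      | zero => exact Or.inl ⟨h0.1, hcmp⟩
      | succ n ih =>
        rcases ih with ⟨h1, h2⟩ | h
        · rcases lt_trichotomy (p (n + 1)) ρ with h' | h' | h'
          · refine Or.inl ⟨?_, h'⟩
            have := (stepC14 ρ (p n) hρ h1 h2).1
            rw [hrec n]; linarith
          · exact Or.inr h'
          · exfalso
            have := (stepC14 ρ (p n) hρ h1 h2).2
            rw [hrec n] at h'; linarith
        · right; rw [hrec n, h]; simp
    -- once p k = ρ, stays ρ; but simpler: case on whether hits ρ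
    have inv' : ∀ k, 0 < p k ∧ p k ≤ ρ := by
      intro k; rcases inv k with ⟨h1, h2⟩ | h
      · exact ⟨h1, h2.le⟩
      · exact ⟨h ▸ hρ.1, h.le⟩
    have hmono : Monotone p := by
      apply monotone_nat_of_le_succ
      intro n
      rcases inv n with ⟨h1, h2⟩ | h
      · have := (stepC14 ρ (p n) hρ h1 h2).1
        rw [hrec n]; linarith
      · rw [hrec n, h]; simp
    have hbdd : BddAbove (Set.range p) := ⟨ρ, by rintro y ⟨k, rfl⟩; exact (inv' k).2⟩
    have hL : Tendsto p atTop (nhds (⨆ k, p k)) := tendsto_atTop_ciSup hmono hbdd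
    have hlb : p 0 ≤ ⨆ k, p k := le_ciSup hbdd 0
    have hub : (⨆ k, p k) ≤ ρ := ciSup_le fun k => (inv' k).2
    have := fixedpt14 ρ (⨆ k, p k) hρ p hrec hL (lt_of_lt_of_le h0.1 hlb)
      (lt_of_le_of_lt hub hρ.2)
    exact this ▸ hL
  · -- constant case
    have hconst : ∀ k, p k = ρ := by
      intro k
      induction k with
      | zero => exact hcmp
      | succ n ih => rw [hrec n, ih]; simp
    have : p = fun _ => ρ := funext hconst
    rw [this]; exact tendsto_const_nhds
  · -- decreasing case: ρ < p 0
    have inv : ∀ k, ρ < p k ∧ p k < 1 ∨ p k = ρ := by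
      intro k
      induction k with
      | zero => exact Or.inl ⟨hcmp, h0.2⟩
      | succ n ih =>
        rcases ih with ⟨h1, h2⟩ | h
        · rcases lt_trichotomy ρ (p (n + 1)) with h' | h' | h'
          · refine Or.inl ⟨h', ?_⟩
            have := (stepB14 ρ (p n) hρ h1 h2).2
            rw [hrec n]; linarith
          · exact Or.inr h'.symm
          · exfalso
            have := (stepB14 ρ (p n) hρ h1 h2).1
            rw [hrec n] at h'; linarith
        · right; rw [hrec n, h]; simp
    have inv' : ∀ k, ρ ≤ p k ∧ p k < 1 := by
      intro k; rcases inv k with ⟨h1, h2⟩ | h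
      · exact ⟨h1.le, h2⟩
      · exact ⟨h.ge, h ▸ hρ.2⟩
    have hanti : Antitone p := by
      apply antitone_nat_of_succ_le
      intro n
      rcases inv n with ⟨h1, h2⟩ | h
      · have := (stepB14 ρ (p n) hρ h1 h2).2
        rw [hrec n]; linarith
      · rw [hrec n, h]; simp
    have hbdd : BddBelow (Set.range p) := ⟨ρ, by rintro y ⟨k, rfl⟩; exact (inv' k).1⟩
    have hL : Tendsto p atTop (nhds (⨅ k, p k)) := tendsto_atTop_ciInf hanti hbdd
    have hub : (⨅ k, p k) ≤ p 0 := ciInf_le hbdd 0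
    have hlb : ρ ≤ ⨅ k, p k := le_ciInf fun k => (inv' k).1
    have := fixedpt14 ρ (⨅ k, p k) hρ p hrec hL (lt_of_lt_of_le hρ.1 hlb)
      (lt_of_le_of_lt hub h0.2)
    exact this ▸ hL
end

section
/- The binary map f(p) = p − p(1−p)(p−ρ)/W(p), with W(p) = 1 − (1−ρ)p² − ρ(1−p)² and ρ ∈ (0,1), maps the open interval (0,1) into itself, and satisfies f(p) > p for p < ρ, f(p) < p for p > ρ, and f(ρ) = ρ. -/
theorem stmt_15 (ρ : ℝ) (hρ : ρ ∈ Set.Ioo (0:ℝ) 1)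
    (W f : ℝ → ℝ)
    (hW : ∀ p, W p = 1 - (1 - ρ) * p ^ 2 - ρ * (1 - p) ^ 2)
    (hf : ∀ p, f p = p - p * (1 - p) * (p - ρ) / W p) :
    (∀ p ∈ Set.Ioo (0:ℝ) 1, f p ∈ Set.Ioo (0:ℝ) 1) ∧
    (∀ p ∈ Set.Ioo (0:ℝ) 1, p < ρ → p < f p) ∧
    (∀ p ∈ Set.Ioo (0:ℝ) 1, ρ < p → f p < p) ∧
    f ρ = ρ := by
  obtain ⟨hρ0, hρ1⟩ := hρ
  have hWpos : ∀ p ∈ Set.Ioo (0:ℝ) 1, 0 < W p := by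
    rintro p ⟨hp0, hp1⟩
    rw [hW]
    nlinarith [mul_pos hp0 (sub_pos.mpr hp1), mul_pos hρ0 (sub_pos.mpr hρ1),
      mul_pos (mul_pos hρ0 hp0) (sub_pos.mpr hp1)]
  refine ⟨?_, ?_, ?_, ?_⟩
  · rintro p hp
    obtain ⟨hp0, hp1⟩ := hp
    have hW' := hWpos p ⟨hp0, hp1⟩
    have hWne : W p ≠ 0 := ne_of_gt hW'
    constructor
    · rw [hf]
      have heq : p - p * (1 - p) * (p - ρ) / W p = p * (1 - (1 - ρ) * p) / W p := by
        field_simp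
        rw [hW]; ring
      rw [heq]
      apply div_pos _ hW'
      nlinarith [mul_pos hp0 (sub_pos.mpr hp1), mul_nonneg hρ0.le (sq_nonneg p)]
    · rw [hf]
      have heq : p - p * (1 - p) * (p - ρ) / W p = 1 - (1 - p) * (1 - ρ * (1 - p)) / W p := by
        field_simp
        rw [hW]; ring
      rw [heq]
      have h1 : 0 < (1 - p) * (1 - ρ * (1 - p)) := by
        nlinarith [mul_pos (sub_pos.mpr hp1) hp0, mul_nonneg (sub_pos.mpr hρ1).le (sq_nonneg (1 - p))]
      have := div_pos h1 hW'
      linarith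
  · rintro p ⟨hp0, hp1⟩ hpρ
    have hW' := hWpos p ⟨hp0, hp1⟩
    rw [hf]
    have h1 : 0 < p * (1 - p) * (ρ - p) / W p :=
      div_pos (mul_pos (mul_pos hp0 (sub_pos.mpr hp1)) (sub_pos.mpr hpρ)) hW'
    have h2 : p * (1 - p) * (p - ρ) / W p = -(p * (1 - p) * (ρ - p) / W p) := by ring
    linarith [h1, h2]
  · rintro p ⟨hp0, hp1⟩ hpρ
    have hW' := hWpos p ⟨hp0, hp1⟩
    rw [hf]
    have h1 : 0 < p * (1 - p) * (p - ρ) / W p :=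
      div_pos (mul_pos (mul_pos hp0 (sub_pos.mpr hp1)) (sub_pos.mpr hpρ)) hW'
    linarith
  · rw [hf]; simp
end
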